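/- arXiv:1102.1558 — 5 statements merged into one kernel-verified Lean document; each statement's English description precedes it below -/
import Mathlib

section
/- Let g be strictly concave on [0,∞) with g(0)=0 and g positive on (0,∞), and set d(x,y) = g(|x-y|). If x₁ < y₂ < y₁ < x₂ (configuration where the interval [y₂,x₂] strictly overlaps [x₁,y₁] with crossing), then d(x₁,y₁) + d(x₂,y₂) > d(x₁,y₂) + d(x₂,y₁). -/
/-- A strictly concave function with `g 0 = 0` and `g > 0` on `(0,∞)` is strictly
increasing on `[0,∞)`. -/
lemma strictMono_of_concave_aux (g : ℝ → ℝ)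
    (hconc : ∀ x : ℝ, 0 ≤ x → ∀ y : ℝ, 0 ≤ y → x ≠ y → ∀ l : ℝ, 0 < l → l < 1 →
      l * g x + (1 - l) * g y < g (l * x + (1 - l) * y))
    (h0 : g 0 = 0) (hpos : ∀ x : ℝ, 0 < x → 0 < g x) :
    ∀ u v : ℝ, 0 ≤ u → u < v → g u < g v := by
  -- auxiliary: if 0 ≤ u < v and g v ≤ g u then for all w > v, g w < g u
  have key : ∀ u v : ℝ, 0 ≤ u → u < v → g v ≤ g u → ∀ w, v < w → g w < g u := by
    intro u v hu huv hle w hvw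
    set l : ℝ := (w - v) / (w - u) with hl
    have hwu : (0:ℝ) < w - u := by linarith
    have hl0 : 0 < l := div_pos (by linarith) hwu
    have hl1 : l < 1 := (div_lt_one hwu).mpr (by linarith)
    have hmid : l * u + (1 - l) * w = v := by
      rw [hl]; field_simp
      ring
    have := hconc u hu w (by linarith) (by intro h; linarith) l hl0 hl1
    rw [hmid] at this
    nlinarith [this, hle]
  intro u v hu huv
  by_contra h
  push_neg at h
  rcases eq_or_lt_of_le hu with hu0 | hu0
  · have := hpos v (by linarith)
    rw [← hu0, h0] at h
    linarith
  · -- u > 0, g u > 0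
    have hgu : 0 < g u := hpos u hu0
    have h1 : g (v + 1) < g u := key u v hu huv h (v + 1) (by linarith)
    set δ : ℝ := g u - g (v + 1) with hδ
    have hδpos : 0 < δ := by linarith
    set v' : ℝ := v + 1 with hv'
    set w : ℝ := u + (v' - u) * (g u / δ + 1) with hw
    have hv'u : 0 < v' - u := by simp [hv']; linarith
    have hfac : 1 < g u / δ + 1 := by have := div_pos hgu hδpos; linarith
    have hwv' : v' < w := by
      have : v' - u < (v' - u) * (g u / δ + 1) := by nlinarith
      simp [hw]; linarith
    -- apply concavity at u, w with midpoint v'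
    set l : ℝ := (w - v') / (w - u) with hl
    have hwu : (0:ℝ) < w - u := by linarith
    have hl0 : 0 < l := div_pos (by linarith) hwu
    have hl1 : l < 1 := (div_lt_one hwu).mpr (by linarith)
    have hmid : l * u + (1 - l) * w = v' := by
      rw [hl]; field_simp
      ring
    have hc := hconc u hu w (by linarith) (by intro hh; linarith) l hl0 hl1
    rw [hmid] at hc
    have hgw : 0 < g w := hpos w (by linarith)
    -- multiply out: (v'-u) * g w < (w-u) * g v' - (w-v') * g u = -(v'-u)*δ
    have h1l : 1 - l = (v' - u) / (w - u) := by
      rw [hl]; field_simp; ring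
    have hwu' : w - u = (v' - u) * (g u / δ + 1) := by simp [hw]
    have hdiv : g u / δ * δ = g u := div_mul_cancel₀ _ (ne_of_gt hδpos)
    -- From hc : l * g u + (1 - l) * g w < g v'
    have hc' : (w - v') * g u + (v' - u) * g w < (w - u) * g v' := by
      have := mul_lt_mul_of_pos_left hc hwu
      calc (w - v') * g u + (v' - u) * g w
          = (w - u) * (l * g u + (1 - l) * g w) := by
            rw [h1l, hl]; field_simp
        _ < (w - u) * g v' := this
    have hgv' : g v' = g u - δ := by simp [hδ, hv']
    rw [hgv', hwu'] at hc'
    nlinarith [hc', hgw, hv'u, hdiv, hgu]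

/-- For `d(x,y) = g |x - y|` with `g` strictly concave, `g 0 = 0`, `g > 0` on `(0,∞)`:
if `x₁ < y₂ < y₁ < x₂` then `d(x₁,y₁) + d(x₂,y₂) > d(x₁,y₂) + d(x₂,y₁)`. -/
theorem stmt_4 (g : ℝ → ℝ)
    (hconc : ∀ x : ℝ, 0 ≤ x → ∀ y : ℝ, 0 ≤ y → x ≠ y → ∀ l : ℝ, 0 < l → l < 1 →
      l * g x + (1 - l) * g y < g (l * x + (1 - l) * y))
    (h0 : g 0 = 0) (hpos : ∀ x : ℝ, 0 < x → 0 < g x)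
    (d : ℝ → ℝ → ℝ) (hd : ∀ x y : ℝ, d x y = g |x - y|)
    (x₁ y₂ y₁ x₂ : ℝ) (h1 : x₁ < y₂) (h2 : y₂ < y₁) (h3 : y₁ < x₂) :
    d x₁ y₂ + d x₂ y₁ < d x₁ y₁ + d x₂ y₂ := by
  have mono := strictMono_of_concave_aux g hconc h0 hpos
  rw [hd, hd, hd, hd]
  have e1 : |x₁ - y₂| = y₂ - x₁ := by rw [abs_sub_comm]; exact abs_of_pos (by linarith)
  have e2 : |x₂ - y₁| = x₂ - y₁ := abs_of_pos (by linarith)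
  have e3 : |x₁ - y₁| = y₁ - x₁ := by rw [abs_sub_comm]; exact abs_of_pos (by linarith)
  have e4 : |x₂ - y₂| = x₂ - y₂ := abs_of_pos (by linarith)
  rw [e1, e2, e3, e4]
  have m1 : g (y₂ - x₁) < g (y₁ - x₁) := mono _ _ (by linarith) (by linarith)
  have m2 : g (x₂ - y₁) < g (x₂ - y₂) := mono _ _ (by linarith) (by linarith)
  linarith
end

section
/- Let g be strictly concave on [0,∞) with g(0)=0 and g positive on (0,∞), and d(x,y)=g(|x-y|). For four distinct reals x₁, y₁, x₂, y₂, if d(x₁,y₁) + d(x₂,y₂) ≤ d(x₁,y₂) + d(x₂,y₁), then the closed intervals [min x₁ y₁, max x₁ y₁] and [min x₂ y₂, max x₂ y₂] are either disjoint or one contains the other. -/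
lemma chord_aux (g : ℝ → ℝ)
    (hconc : ∀ x : ℝ, 0 ≤ x → ∀ y : ℝ, 0 ≤ y → x ≠ y → ∀ l : ℝ, 0 < l → l < 1 →
      l * g x + (1 - l) * g y < g (l * x + (1 - l) * y))
    (a b c : ℝ) (ha : 0 ≤ a) (hab : a < b) (hbc : b < c) :
    (c - b) * g a + (b - a) * g c < (c - a) * g b := by
  have hac : a < c := hab.trans hbc
  have hca : 0 < c - a := by linarith
  have hl : 0 < (c - b) / (c - a) := div_pos (by linarith) hca
  have hl1 : (c - b) / (c - a) < 1 := (div_lt_one hca).mpr (by linarith)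
  have key := hconc a ha c (by linarith) (ne_of_lt hac) ((c - b) / (c - a)) hl hl1
  have e : (c - b) / (c - a) * a + (1 - (c - b) / (c - a)) * c = b := by
    field_simp
    ring
  rw [e] at key
  have h2 := mul_lt_mul_of_pos_left key hca
  have e2 : (c - a) * ((c - b) / (c - a) * g a + (1 - (c - b) / (c - a)) * g c)
      = (c - b) * g a + (b - a) * g c := by
    field_simp
    ring
  linarith [e2 ▸ h2]

lemma mono_aux (g : ℝ → ℝ)
    (hconc : ∀ x : ℝ, 0 ≤ x → ∀ y : ℝ, 0 ≤ y → x ≠ y → ∀ l : ℝ, 0 < l → l < 1 →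
      l * g x + (1 - l) * g y < g (l * x + (1 - l) * y))
    (hpos : ∀ x : ℝ, 0 < x → 0 < g x)
    (a b : ℝ) (ha : 0 ≤ a) (hab : a < b) : g a < g b := by
  by_contra h
  push_neg at h
  set w := (a + b) / 2 with hw
  have hw1 : a < w := by rw [hw]; linarith
  have hw2 : w < b := by rw [hw]; linarith
  have hc1 := chord_aux g hconc a w b ha hw1 hw2
  have hbw : g b < g w := by nlinarith [mul_nonneg (show (0:ℝ) ≤ b - w by linarith) (show 0 ≤ g a - g b by linarith)]
  have hgb : 0 < g b := hpos b (by linarith)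
  set c := b + (g b + 1) * (b - w) / (g w - g b) with hcdef
  have hbc : b < c := by
    rw [hcdef]
    have : 0 < (g b + 1) * (b - w) / (g w - g b) :=
      div_pos (by nlinarith) (by linarith)
    linarith
  have hc2 := chord_aux g hconc w b c (by linarith) hw2 hbc
  have hne : g w - g b ≠ 0 := ne_of_gt (by linarith)
  have hcb : (c - b) * (g w - g b) = (g b + 1) * (b - w) := by
    rw [hcdef]
    field_simp
    ring
  have hgc : (b - w) * g c < (b - w) * (-1) := by nlinarith [hc2, hcb]
  have : g c < -1 := lt_of_mul_lt_mul_left hgc (by linarith)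
  have := hpos c (by linarith)
  linarith

lemma keyA_aux (g : ℝ → ℝ)
    (hconc : ∀ x : ℝ, 0 ≤ x → ∀ y : ℝ, 0 ≤ y → x ≠ y → ∀ l : ℝ, 0 < l → l < 1 →
      l * g x + (1 - l) * g y < g (l * x + (1 - l) * y))
    (p q r : ℝ) (hp : 0 < p) (hq : 0 < q) (hr : 0 < r) :
    g (p + q + r) + g q < g (p + q) + g (q + r) := by
  have h1 := chord_aux g hconc q (p + q) (p + q + r) (le_of_lt hq) (by linarith) (by linarith)
  have h2 := chord_aux g hconc q (q + r) (p + q + r) (le_of_lt hq) (by linarith) (by linarith)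
  have hsum : (p + r) * (g (p + q + r) + g q) < (p + r) * (g (p + q) + g (q + r)) := by
    nlinarith [h1, h2]
  exact lt_of_mul_lt_mul_left hsum (by linarith)

lemma keyB_aux (g : ℝ → ℝ)
    (hconc : ∀ x : ℝ, 0 ≤ x → ∀ y : ℝ, 0 ≤ y → x ≠ y → ∀ l : ℝ, 0 < l → l < 1 →
      l * g x + (1 - l) * g y < g (l * x + (1 - l) * y))
    (hpos : ∀ x : ℝ, 0 < x → 0 < g x)
    (p q r : ℝ) (hp : 0 < p) (hq : 0 < q) (hr : 0 < r) :
    g p + g r < g (p + q) + g (q + r) :=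
  add_lt_add (mono_aux g hconc hpos p (p + q) hp.le (by linarith))
    (mono_aux g hconc hpos r (q + r) hr.le (by linarith))

/-- No-crossing lemma: with a strictly concave cost, if
`d(x₁,y₁) + d(x₂,y₂) ≤ d(x₁,y₂) + d(x₂,y₁)` then the intervals `[x₁,y₁]` and
`[x₂,y₂]` are disjoint or nested. -/
theorem stmt_6 (g : ℝ → ℝ)
    (hconc : ∀ x : ℝ, 0 ≤ x → ∀ y : ℝ, 0 ≤ y → x ≠ y → ∀ l : ℝ, 0 < l → l < 1 →
      l * g x + (1 - l) * g y < g (l * x + (1 - l) * y))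
    (h0 : g 0 = 0) (hpos : ∀ x : ℝ, 0 < x → 0 < g x)
    (d : ℝ → ℝ → ℝ) (hd : ∀ x y : ℝ, d x y = g |x - y|)
    (x₁ y₁ x₂ y₂ : ℝ)
    (hdist : x₁ ≠ y₁ ∧ x₁ ≠ x₂ ∧ x₁ ≠ y₂ ∧ y₁ ≠ x₂ ∧ y₁ ≠ y₂ ∧ x₂ ≠ y₂)
    (hle : d x₁ y₁ + d x₂ y₂ ≤ d x₁ y₂ + d x₂ y₁) :
    Disjoint (Set.Icc (min x₁ y₁) (max x₁ y₁)) (Set.Icc (min x₂ y₂) (max x₂ y₂)) ∨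
    Set.Icc (min x₁ y₁) (max x₁ y₁) ⊆ Set.Icc (min x₂ y₂) (max x₂ y₂) ∨
    Set.Icc (min x₂ y₂) (max x₂ y₂) ⊆ Set.Icc (min x₁ y₁) (max x₁ y₁) := by
  obtain ⟨h11, h12, h13, h14, h15, h22⟩ := hdist
  have habs : ∀ u v : ℝ, u < v → |u - v| = v - u := fun u v h => by
    rw [abs_sub_comm]; exact abs_of_pos (by linarith)
  have habs' : ∀ u v : ℝ, v < u → |u - v| = u - v := fun u v h => abs_of_pos (by linarith)
  rw [hd, hd, hd, hd] at hle
  rcases le_total x₁ y₁ with h1 | h1 <;> rcases le_total x₂ y₂ with h2 | h2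
  · -- x₁ < y₁, x₂ < y₂
    have ha1 : x₁ < y₁ := lt_of_le_of_ne h1 h11
    have ha2 : x₂ < y₂ := lt_of_le_of_ne h2 h22
    rw [min_eq_left h1, max_eq_right h1, min_eq_left h2, max_eq_right h2]
    by_contra hcon
    push_neg at hcon
    obtain ⟨hnd, hs1, hs2⟩ := hcon
    obtain ⟨z, hz1, hz2⟩ := Set.not_disjoint_iff.mp hnd
    rw [Set.mem_Icc] at hz1 hz2
    rw [Set.Icc_subset_Icc_iff ha1.le] at hs1
    rw [Set.Icc_subset_Icc_iff ha2.le] at hs2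
    push_neg at hs1 hs2
    rcases lt_or_gt_of_ne h12 with hxx | hxx
    · -- x₁ < x₂ < y₁ < y₂
      have hy : y₁ < y₂ := hs2 hxx.le
      have hm : x₂ < y₁ := lt_of_le_of_ne (le_trans hz2.1 hz1.2) (Ne.symm h14)
      rw [habs x₁ y₁ ha1, habs x₂ y₂ ha2, habs x₁ y₂ (by linarith),
        habs x₂ y₁ hm] at hle
      have hk := keyA_aux g hconc (x₂ - x₁) (y₁ - x₂) (y₂ - y₁)
        (by linarith) (by linarith) (by linarith)
      rw [show x₂ - x₁ + (y₁ - x₂) + (y₂ - y₁) = y₂ - x₁ by ring,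
        show x₂ - x₁ + (y₁ - x₂) = y₁ - x₁ by ring,
        show y₁ - x₂ + (y₂ - y₁) = y₂ - x₂ by ring] at hk
      linarith
    · -- x₂ < x₁ < y₂ < y₁
      have hy : y₂ < y₁ := hs1 hxx.le
      have hm : x₁ < y₂ := lt_of_le_of_ne (le_trans hz1.1 hz2.2) h13
      rw [habs x₁ y₁ ha1, habs x₂ y₂ ha2, habs x₁ y₂ hm,
        habs x₂ y₁ (by linarith)] at hle
      have hk := keyA_aux g hconc (x₁ - x₂) (y₂ - x₁) (y₁ - y₂)
        (by linarith) (by linarith) (by linarith)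
      rw [show x₁ - x₂ + (y₂ - x₁) + (y₁ - y₂) = y₁ - x₂ by ring,
        show x₁ - x₂ + (y₂ - x₁) = y₂ - x₂ by ring,
        show y₂ - x₁ + (y₁ - y₂) = y₁ - x₁ by ring] at hk
      linarith
  · -- x₁ < y₁, y₂ < x₂
    have ha1 : x₁ < y₁ := lt_of_le_of_ne h1 h11
    have ha2 : y₂ < x₂ := lt_of_le_of_ne h2 (Ne.symm h22)
    rw [min_eq_left h1, max_eq_right h1, min_eq_right h2, max_eq_left h2]
    by_contra hcon
    push_neg at hcon
    obtain ⟨hnd, hs1, hs2⟩ := hcon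
    obtain ⟨z, hz1, hz2⟩ := Set.not_disjoint_iff.mp hnd
    rw [Set.mem_Icc] at hz1 hz2
    rw [Set.Icc_subset_Icc_iff ha1.le] at hs1
    rw [Set.Icc_subset_Icc_iff ha2.le] at hs2
    push_neg at hs1 hs2
    rcases lt_or_gt_of_ne h13 with hxx | hxx
    · -- x₁ < y₂ < y₁ < x₂
      have hy : y₁ < x₂ := hs2 hxx.le
      have hm : y₂ < y₁ := lt_of_le_of_ne (le_trans hz2.1 hz1.2) (Ne.symm h15)
      rw [habs x₁ y₁ ha1, habs' x₂ y₂ ha2, habs x₁ y₂ hxx,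
        habs' x₂ y₁ hy] at hle
      have hk := keyB_aux g hconc hpos (y₂ - x₁) (y₁ - y₂) (x₂ - y₁)
        (by linarith) (by linarith) (by linarith)
      rw [show y₂ - x₁ + (y₁ - y₂) = y₁ - x₁ by ring,
        show y₁ - y₂ + (x₂ - y₁) = x₂ - y₂ by ring] at hk
      linarith
    · -- y₂ < x₁ < x₂ < y₁
      have hy : x₂ < y₁ := hs1 hxx.le
      have hm : x₁ < x₂ := lt_of_le_of_ne (le_trans hz1.1 hz2.2) h12
      rw [habs x₁ y₁ ha1, habs' x₂ y₂ ha2, habs' x₁ y₂ hxx,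
        habs x₂ y₁ hy] at hle
      have hk := keyB_aux g hconc hpos (x₁ - y₂) (x₂ - x₁) (y₁ - x₂)
        (by linarith) (by linarith) (by linarith)
      rw [show x₁ - y₂ + (x₂ - x₁) = x₂ - y₂ by ring,
        show x₂ - x₁ + (y₁ - x₂) = y₁ - x₁ by ring] at hk
      linarith
  · -- y₁ < x₁, x₂ < y₂
    have ha1 : y₁ < x₁ := lt_of_le_of_ne h1 (Ne.symm h11)
    have ha2 : x₂ < y₂ := lt_of_le_of_ne h2 h22
    rw [min_eq_right h1, max_eq_left h1, min_eq_left h2, max_eq_right h2]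
    by_contra hcon
    push_neg at hcon
    obtain ⟨hnd, hs1, hs2⟩ := hcon
    obtain ⟨z, hz1, hz2⟩ := Set.not_disjoint_iff.mp hnd
    rw [Set.mem_Icc] at hz1 hz2
    rw [Set.Icc_subset_Icc_iff ha1.le] at hs1
    rw [Set.Icc_subset_Icc_iff ha2.le] at hs2
    push_neg at hs1 hs2
    rcases lt_or_gt_of_ne h14 with hxx | hxx
    · -- y₁ < x₂ < x₁ < y₂
      have hy : x₁ < y₂ := hs2 hxx.le
      have hm : x₂ < x₁ := lt_of_le_of_ne (le_trans hz2.1 hz1.2) (Ne.symm h12)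
      rw [habs' x₁ y₁ ha1, habs x₂ y₂ ha2, habs x₁ y₂ hy,
        habs' x₂ y₁ hxx] at hle
      have hk := keyB_aux g hconc hpos (x₂ - y₁) (x₁ - x₂) (y₂ - x₁)
        (by linarith) (by linarith) (by linarith)
      rw [show x₂ - y₁ + (x₁ - x₂) = x₁ - y₁ by ring,
        show x₁ - x₂ + (y₂ - x₁) = y₂ - x₂ by ring] at hk
      linarith
    · -- x₂ < y₁ < y₂ < x₁
      have hy : y₂ < x₁ := hs1 hxx.le
      have hm : y₁ < y₂ := lt_of_le_of_ne (le_trans hz1.1 hz2.2) h15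
      rw [habs' x₁ y₁ ha1, habs x₂ y₂ ha2, habs' x₁ y₂ hy,
        habs x₂ y₁ hxx] at hle
      have hk := keyB_aux g hconc hpos (y₁ - x₂) (y₂ - y₁) (x₁ - y₂)
        (by linarith) (by linarith) (by linarith)
      rw [show y₁ - x₂ + (y₂ - y₁) = y₂ - x₂ by ring,
        show y₂ - y₁ + (x₁ - y₂) = x₁ - y₁ by ring] at hk
      linarith
  · -- y₁ < x₁, y₂ < x₂
    have ha1 : y₁ < x₁ := lt_of_le_of_ne h1 (Ne.symm h11)
    have ha2 : y₂ < x₂ := lt_of_le_of_ne h2 (Ne.symm h22)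
    rw [min_eq_right h1, max_eq_left h1, min_eq_right h2, max_eq_left h2]
    by_contra hcon
    push_neg at hcon
    obtain ⟨hnd, hs1, hs2⟩ := hcon
    obtain ⟨z, hz1, hz2⟩ := Set.not_disjoint_iff.mp hnd
    rw [Set.mem_Icc] at hz1 hz2
    rw [Set.Icc_subset_Icc_iff ha1.le] at hs1
    rw [Set.Icc_subset_Icc_iff ha2.le] at hs2
    push_neg at hs1 hs2
    rcases lt_or_gt_of_ne h15 with hxx | hxx
    · -- y₁ < y₂ < x₁ < x₂
      have hy : x₁ < x₂ := hs2 hxx.le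
      have hm : y₂ < x₁ := lt_of_le_of_ne (le_trans hz2.1 hz1.2) (Ne.symm h13)
      rw [habs' x₁ y₁ ha1, habs' x₂ y₂ ha2, habs' x₁ y₂ hm,
        habs' x₂ y₁ (by linarith)] at hle
      have hk := keyA_aux g hconc (y₂ - y₁) (x₁ - y₂) (x₂ - x₁)
        (by linarith) (by linarith) (by linarith)
      rw [show y₂ - y₁ + (x₁ - y₂) + (x₂ - x₁) = x₂ - y₁ by ring,
        show y₂ - y₁ + (x₁ - y₂) = x₁ - y₁ by ring,
        show x₁ - y₂ + (x₂ - x₁) = x₂ - y₂ by ring] at hk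
      linarith
    · -- y₂ < y₁ < x₂ < x₁
      have hy : x₂ < x₁ := hs1 hxx.le
      have hm : y₁ < x₂ := lt_of_le_of_ne (le_trans hz1.1 hz2.2) h14
      rw [habs' x₁ y₁ ha1, habs' x₂ y₂ ha2, habs' x₁ y₂ (by linarith),
        habs' x₂ y₁ hm] at hle
      have hk := keyA_aux g hconc (y₁ - y₂) (x₂ - y₁) (x₁ - x₂)
        (by linarith) (by linarith) (by linarith)
      rw [show y₁ - y₂ + (x₂ - y₁) + (x₁ - x₂) = x₁ - y₂ by ring,
        show y₁ - y₂ + (x₂ - y₁) = x₂ - y₂ by ring,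
        show x₂ - y₁ + (x₁ - x₂) = x₁ - y₁ by ring] at hk
      linarith
end

section
/- Let 2n points x₁ < ... < x_{2n} on ℝ be given, with weight d(xᵢ,xⱼ) = g(|xᵢ - xⱼ|) for g strictly concave on [0,∞) with g(0)=0 and g > 0 on (0,∞). Any minimum-weight perfect matching on these points is nested: for any two matched pairs, the corresponding closed intervals are either disjoint or one contains the other. -/
lemma concave_pair (g : ℝ → ℝ)
    (hconc : ∀ a : ℝ, 0 ≤ a → ∀ b : ℝ, 0 ≤ b → a ≠ b → ∀ l : ℝ, 0 < l → l < 1 →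
      l * g a + (1 - l) * g b < g (l * a + (1 - l) * b))
    {P Q p q : ℝ} (hQ : 0 ≤ Q) (hQp : Q < p) (hpP : p < P) (hsum : p + q = P + Q) :
    g P + g Q < g p + g q := by
  have hQP : Q < P := hQp.trans hpP
  have hd : 0 < P - Q := by linarith
  set l : ℝ := (P - p) / (P - Q) with hl
  have hl1 : 0 < l := div_pos (by linarith) hd
  have hl2 : l < 1 := by rw [hl, div_lt_one hd]; linarith
  have h1 : l * Q + (1 - l) * P = p := by
    rw [hl]
    field_simp [hl]
    ring
  have h2 : (1 - l) * Q + (1 - (1 - l)) * P = q := by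
    rw [hl, show q = P + Q - p by linarith]
    field_simp [hl]
    ring
  have c1 := hconc Q hQ P (hQ.trans hQP.le) hQP.ne l hl1 hl2
  have c2 := hconc Q hQ P (hQ.trans hQP.le) hQP.ne (1 - l) (by linarith) (by linarith)
  rw [h1] at c1
  rw [h2] at c2
  linarith

lemma cross_false (n : ℕ) (x : Fin (2 * n) → ℝ) (hx : StrictMono x)
    (g : ℝ → ℝ)
    (hconc : ∀ a : ℝ, 0 ≤ a → ∀ b : ℝ, 0 ≤ b → a ≠ b → ∀ l : ℝ, 0 < l → l < 1 →
      l * g a + (1 - l) * g b < g (l * a + (1 - l) * b))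
    (f : Fin (2 * n) → Fin (2 * n))
    (hinv : ∀ i, f (f i) = i) (hnfix : ∀ i, f i ≠ i)
    (hmin : ∀ f' : Fin (2 * n) → Fin (2 * n), (∀ i, f' (f' i) = i) →
      (∀ i, f' i ≠ i) →
      ∑ i, g |x i - x (f i)| ≤ ∑ i, g |x i - x (f' i)|)
    (a c b d : Fin (2 * n)) (hfab : f a = b) (hfcd : f c = d)
    (hac : a < c) (hcb : c < b) (hbd : b < d) : False := by
  have hfba : f b = a := by rw [← hfab, hinv]
  have hfdc : f d = c := by rw [← hfcd, hinv]
  have hab : a < b := hac.trans hcb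
  have had : a < d := hab.trans hbd
  have hcd : c < d := hcb.trans hbd
  -- the swapped matching
  set f' : Fin (2 * n) → Fin (2 * n) := fun t =>
    if t = a then d else if t = d then a else if t = b then c else if t = c then b
    else f t with hf'
  have ea : f' a = d := by simp [hf']
  have ed : f' d = a := by simp [hf', had.ne', had.ne]
  have eb : f' b = c := by simp [hf', hab.ne', hbd.ne, hcb.ne']
  have ec : f' c = b := by simp [hf', hac.ne', hcd.ne, hcb.ne]
  have egen : ∀ t, t ≠ a → t ≠ b → t ≠ c → t ≠ d → f' t = f t := by
    intro t h1 h2 h3 h4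
    simp [hf', h1, h2, h3, h4]
  have hft : ∀ t, t ≠ a → t ≠ b → t ≠ c → t ≠ d →
      f t ≠ a ∧ f t ≠ b ∧ f t ≠ c ∧ f t ≠ d := by
    intro t h1 h2 h3 h4
    refine ⟨fun h => h2 ?_, fun h => h1 ?_, fun h => h4 ?_, fun h => h3 ?_⟩
    · rw [← hinv t, h]; exact hfab
    · rw [← hinv t, h]; exact hfba
    · rw [← hinv t, h]; exact hfcd
    · rw [← hinv t, h]; exact hfdc
  have hinv' : ∀ t, f' (f' t) = t := by
    intro t
    by_cases h1 : t = a; · rw [h1, ea, ed]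
    by_cases h2 : t = b; · rw [h2, eb, ec]
    by_cases h3 : t = c; · rw [h3, ec, eb]
    by_cases h4 : t = d; · rw [h4, ed, ea]
    obtain ⟨g1, g2, g3, g4⟩ := hft t h1 h2 h3 h4
    rw [egen t h1 h2 h3 h4, egen (f t) g1 g2 g3 g4, hinv]
  have hnfix' : ∀ t, f' t ≠ t := by
    intro t
    by_cases h1 : t = a; · rw [h1, ea]; exact had.ne'
    by_cases h2 : t = b; · rw [h2, eb]; exact hcb.ne
    by_cases h3 : t = c; · rw [h3, ec]; exact hcb.ne'
    by_cases h4 : t = d; · rw [h4, ed]; exact had.ne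
    rw [egen t h1 h2 h3 h4]; exact hnfix t
  -- sum comparison
  have key : ∑ t, g |x t - x (f' t)| < ∑ t, g |x t - x (f t)| := by
    have hsplit : ∀ (F : Fin (2 * n) → ℝ),
        ∑ t, F t = ∑ t ∈ ({a, b, c, d} : Finset (Fin (2 * n))), F t
          + ∑ t ∈ ({a, b, c, d} : Finset (Fin (2 * n)))ᶜ, F t := by
      intro F
      exact (Finset.sum_add_sum_compl _ _).symm
    rw [hsplit (fun t => g |x t - x (f' t)|), hsplit (fun t => g |x t - x (f t)|)]
    have hcompl : ∑ t ∈ ({a, b, c, d} : Finset (Fin (2 * n)))ᶜ, g |x t - x (f' t)|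
        = ∑ t ∈ ({a, b, c, d} : Finset (Fin (2 * n)))ᶜ, g |x t - x (f t)| := by
      apply Finset.sum_congr rfl
      intro t ht
      simp only [Finset.mem_compl, Finset.mem_insert, Finset.mem_singleton, not_or] at ht
      rw [egen t ht.1 ht.2.1 ht.2.2.1 ht.2.2.2]
    rw [hcompl]
    have hexp : ∀ (F : Fin (2 * n) → ℝ),
        ∑ t ∈ ({a, b, c, d} : Finset (Fin (2 * n))), F t = F a + F b + F c + F d := by
      intro F
      rw [Finset.sum_insert (by simp [hab.ne, hac.ne, had.ne]),
        Finset.sum_insert (by simp [hcb.ne', hbd.ne]),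
        Finset.sum_insert (by simp [hcd.ne]), Finset.sum_singleton]
      ring
    rw [hexp (fun t => g |x t - x (f' t)|), hexp (fun t => g |x t - x (f t)|)]
    simp only [ea, eb, ec, ed, hfab, hfba, hfcd, hfdc]
    have hxab : x a < x b := hx hab
    have hxac : x a < x c := hx hac
    have hxcb : x c < x b := hx hcb
    have hxbd : x b < x d := hx hbd
    have hxad : x a < x d := hx had
    have hxcd : x c < x d := hx hcd
    have r1 : |x a - x d| = x d - x a := by rw [abs_sub_comm]; exact abs_of_nonneg (by linarith)
    have r2 : |x d - x a| = x d - x a := abs_of_nonneg (by linarith)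
    have r3 : |x b - x c| = x b - x c := abs_of_nonneg (by linarith)
    have r4 : |x c - x b| = x b - x c := by rw [abs_sub_comm]; exact abs_of_nonneg (by linarith)
    have r5 : |x a - x b| = x b - x a := by rw [abs_sub_comm]; exact abs_of_nonneg (by linarith)
    have r6 : |x b - x a| = x b - x a := abs_of_nonneg (by linarith)
    have r7 : |x c - x d| = x d - x c := by rw [abs_sub_comm]; exact abs_of_nonneg (by linarith)
    have r8 : |x d - x c| = x d - x c := abs_of_nonneg (by linarith)
    rw [r1, r2, r3, r4, r5, r6, r7, r8]
    have hkey : g (x d - x a) + g (x b - x c) < g (x b - x a) + g (x d - x c) :=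
      concave_pair g hconc (by linarith) (by linarith) (by linarith) (by ring)
    linarith
  exact absurd (hmin f' hinv' hnfix') (not_le.mpr key)

/-- A minimum-weight perfect matching (represented as a fixed-point-free
involution `f` of the index set) on points `x₁ < ⋯ < x_{2n}` with strictly
concave cost is nested. -/
theorem stmt_9 (n : ℕ) (x : Fin (2 * n) → ℝ) (hx : StrictMono x)
    (g : ℝ → ℝ)
    (hconc : ∀ a : ℝ, 0 ≤ a → ∀ b : ℝ, 0 ≤ b → a ≠ b → ∀ l : ℝ, 0 < l → l < 1 →
      l * g a + (1 - l) * g b < g (l * a + (1 - l) * b))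
    (h0 : g 0 = 0) (hpos : ∀ a : ℝ, 0 < a → 0 < g a)
    (f : Fin (2 * n) → Fin (2 * n))
    (hinv : ∀ i, f (f i) = i) (hnfix : ∀ i, f i ≠ i)
    (hmin : ∀ f' : Fin (2 * n) → Fin (2 * n), (∀ i, f' (f' i) = i) →
      (∀ i, f' i ≠ i) →
      ∑ i, g |x i - x (f i)| ≤ ∑ i, g |x i - x (f' i)|) :
    ∀ i k : Fin (2 * n), k ≠ i → k ≠ f i →
      Disjoint (Set.Icc (min (x i) (x (f i))) (max (x i) (x (f i))))
        (Set.Icc (min (x k) (x (f k))) (max (x k) (x (f k)))) ∨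
      Set.Icc (min (x i) (x (f i))) (max (x i) (x (f i))) ⊆
        Set.Icc (min (x k) (x (f k))) (max (x k) (x (f k))) ∨
      Set.Icc (min (x k) (x (f k))) (max (x k) (x (f k))) ⊆
        Set.Icc (min (x i) (x (f i))) (max (x i) (x (f i))) := by
  intro i k hki hkfi
  by_contra hcon
  push_neg at hcon
  obtain ⟨hnd, hns1, hns2⟩ := hcon
  have hfki : f k ≠ i := fun h => hkfi (by rw [← h, hinv])
  have hfkfi : f k ≠ f i := fun h => hki (by rw [← hinv k, h, hinv])
  set i0 := min i (f i) with hi0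
  set i1 := max i (f i) with hi1
  set k0 := min k (f k) with hk0
  set k1 := max k (f k) with hk1
  have hii : i0 < i1 := min_lt_max.mpr (hnfix i).symm
  have hkk : k0 < k1 := min_lt_max.mpr (hnfix k).symm
  have hfi0 : f i0 = i1 ∧ f i1 = i0 := by
    rcases le_total i (f i) with h | h
    · rw [hi0, hi1, min_eq_left h, max_eq_right h]
      exact ⟨rfl, hinv i⟩
    · rw [hi0, hi1, min_eq_right h, max_eq_left h]
      exact ⟨hinv i, rfl⟩
  have hfk0 : f k0 = k1 ∧ f k1 = k0 := by
    rcases le_total k (f k) with h | h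
    · rw [hk0, hk1, min_eq_left h, max_eq_right h]
      exact ⟨rfl, hinv k⟩
    · rw [hk0, hk1, min_eq_right h, max_eq_left h]
      exact ⟨hinv k, rfl⟩
  have hnei : ∀ u : Fin (2 * n), (u = k ∨ u = f k) → ∀ v : Fin (2 * n),
      (v = i ∨ v = f i) → u ≠ v := by
    rintro u (rfl | rfl) v (rfl | rfl)
    exacts [hki, hkfi, hfki, hfkfi]
  have hk0m : k0 = k ∨ k0 = f k := min_choice k (f k)
  have hk1m : k1 = k ∨ k1 = f k := max_choice k (f k)
  have hi0m : i0 = i ∨ i0 = f i := min_choice i (f i)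
  have hi1m : i1 = i ∨ i1 = f i := max_choice i (f i)
  have hne00 : k0 ≠ i0 := hnei k0 hk0m i0 hi0m
  have hne01 : k0 ≠ i1 := hnei k0 hk0m i1 hi1m
  have hne10 : k1 ≠ i0 := hnei k1 hk1m i0 hi0m
  have hne11 : k1 ≠ i1 := hnei k1 hk1m i1 hi1m
  -- rewrite intervals
  rw [← hx.monotone.map_min, ← hx.monotone.map_max, ← hx.monotone.map_min,
    ← hx.monotone.map_max, ← hi0, ← hi1, ← hk0, ← hk1] at hnd hns1 hns2
  -- extract inequalities
  have hle1 : x k0 ≤ x i1 ∧ x i0 ≤ x k1 := by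
    rw [Set.not_disjoint_iff] at hnd
    obtain ⟨z, ⟨hz1, hz2⟩, hz3, hz4⟩ := hnd
    exact ⟨hz3.trans hz2, hz1.trans hz4⟩
  have hk0i1 : k0 < i1 := lt_of_le_of_ne (hx.le_iff_le.mp hle1.1) hne01
  have hi0k1 : i0 < k1 := lt_of_le_of_ne (hx.le_iff_le.mp hle1.2) hne10.symm
  have halt1 : i0 < k0 ∨ k1 < i1 := by
    by_contra h
    push_neg at h
    exact hns1 (Set.Icc_subset_Icc (hx.monotone h.1) (hx.monotone h.2))
  have halt2 : k0 < i0 ∨ i1 < k1 := by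
    by_contra h
    push_neg at h
    exact hns2 (Set.Icc_subset_Icc (hx.monotone h.1) (hx.monotone h.2))
  rcases halt1 with h1 | h1 <;> rcases halt2 with h2 | h2
  · exact absurd h1 (not_lt.mpr h2.le)
  · exact cross_false n x hx g hconc f hinv hnfix hmin i0 k0 i1 k1 hfi0.1 hfk0.1 h1 hk0i1 h2
  · exact cross_false n x hx g hconc f hinv hnfix hmin k0 i0 k1 i1 hfk0.1 hfi0.1 h2 hi0k1 h1
  · exact absurd h1 (not_lt.mpr h2.le)
end

section
/- Every restriction of a minimum-weight perfect matching is itself minimal: if M is a minimum-weight perfect matching on points x₁ < ... < x_{2n} and S is a union of pairs of M, then M restricted to the endpoints of S is a minimum-weight perfect matching on those endpoints. -/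
/-- Bellman principle: the restriction of a minimum-weight perfect matching to a
union `S` of its pairs is a minimum-weight perfect matching on the endpoints in
`S`. -/
theorem stmt_13 (n : ℕ) (x : Fin (2 * n) → ℝ) (hx : StrictMono x)
    (g : ℝ → ℝ)
    (hconc : ∀ a : ℝ, 0 ≤ a → ∀ b : ℝ, 0 ≤ b → a ≠ b → ∀ l : ℝ, 0 < l → l < 1 →
      l * g a + (1 - l) * g b < g (l * a + (1 - l) * b))
    (h0 : g 0 = 0) (hpos : ∀ a : ℝ, 0 < a → 0 < g a)
    (f : Fin (2 * n) → Fin (2 * n))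
    (hinv : ∀ i, f (f i) = i) (hnfix : ∀ i, f i ≠ i)
    (hmin : ∀ f' : Fin (2 * n) → Fin (2 * n), (∀ i, f' (f' i) = i) →
      (∀ i, f' i ≠ i) →
      ∑ i, g |x i - x (f i)| ≤ ∑ i, g |x i - x (f' i)|)
    (S : Finset (Fin (2 * n))) (hS : ∀ i ∈ S, f i ∈ S) :
    ∀ f' : Fin (2 * n) → Fin (2 * n),
      (∀ i ∈ S, f' i ∈ S ∧ f' (f' i) = i ∧ f' i ≠ i) →
      ∑ i ∈ S, g |x i - x (f i)| ≤ ∑ i ∈ S, g |x i - x (f' i)| := by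
  intro f' hf'
  classical
  set F : Fin (2 * n) → Fin (2 * n) := fun i => if i ∈ S then f' i else f i with hF
  have hcompl : ∀ i, i ∉ S → f i ∉ S := by
    intro i hi hfi
    exact hi (hinv i ▸ hS _ hfi)
  have hFinv : ∀ i, F (F i) = i := by
    intro i
    by_cases hi : i ∈ S
    · simp [hF, hi, (hf' i hi).1, (hf' i hi).2.1]
    · simp [hF, hi, hcompl i hi, hinv i]
  have hFnfix : ∀ i, F i ≠ i := by
    intro i
    by_cases hi : i ∈ S
    · simpa [hF, hi] using (hf' i hi).2.2
    · simpa [hF, hi] using hnfix i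
  have h := hmin F hFinv hFnfix
  have hsplit : ∀ (h : Fin (2 * n) → Fin (2 * n)),
      ∑ i, g |x i - x (h i)| = ∑ i ∈ S, g |x i - x (h i)| + ∑ i ∈ Sᶜ, g |x i - x (h i)| :=
    fun h => (Finset.sum_add_sum_compl S _).symm
  rw [hsplit f, hsplit F] at h
  have hFeq : ∑ i ∈ Sᶜ, g |x i - x (F i)| = ∑ i ∈ Sᶜ, g |x i - x (f i)| := by
    apply Finset.sum_congr rfl
    intro i hi
    simp only [Finset.mem_compl] at hi
    simp [hF, hi]
  have hFS : ∑ i ∈ S, g |x i - x (F i)| = ∑ i ∈ S, g |x i - x (f' i)| := by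
    apply Finset.sum_congr rfl
    intro i hi
    simp [hF, hi]
  rw [hFeq, hFS] at h
  linarith
end

section
/- For points x₁ < ... < x_{2n} with weight d(x,y) = g(|x-y|), g concave, g(0)=0, g ≥ 0: if for every i of opposite parity with j (i<j) one has W(i,j) = W(i,j-2) + W(i+2,j) - W(i+2,j-2) (the second alternative always attains the minimum in the recursion), then the matching {x₁,x₂}, {x₃,x₄}, ..., {x_{2n-1},x_{2n}} is a minimum-weight perfect matching, i.e., W(1,2n) = Σ_{k=1}^{n} d(x_{2k-1}, x_{2k}). -/
/-- `f` is a perfect matching of the index interval `{i, …, j}`. -/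
def IsPM (i j : ℕ) (f : ℕ → ℕ) : Prop :=
  ∀ k ∈ Finset.Icc i j, f k ∈ Finset.Icc i j ∧ f (f k) = k ∧ f k ≠ k

/-- The weight of the matching `f` of `{i, …, j}` (each pair counted once). -/
noncomputable def matchWeight (x : ℕ → ℝ) (g : ℝ → ℝ) (i j : ℕ) (f : ℕ → ℕ) : ℝ :=
  (∑ k ∈ Finset.Icc i j, g |x k - x (f k)|) / 2

/-- `w` is the minimum weight of a perfect matching on `{i, …, j}`. -/
def IsMinWeight (x : ℕ → ℝ) (g : ℝ → ℝ) (i j : ℕ) (w : ℝ) : Prop :=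
  (∃ f, IsPM i j f ∧ w = matchWeight x g i j f) ∧
  ∀ f, IsPM i j f → w ≤ matchWeight x g i j f

/-- If the second alternative of the recursion always attains the minimum, then
the matching of consecutive pairs `{x₁,x₂}, …, {x_{2n-1},x_{2n}}` is optimal:
`W(1,2n) = ∑_{k=1}^{n} d(x_{2k-1}, x_{2k})`. -/
theorem stmt_17 (n : ℕ) (x : ℕ → ℝ) (hx : StrictMono x) (g : ℝ → ℝ)
    (hg0 : ∀ a : ℝ, 0 ≤ a → 0 ≤ g a) (h0 : g 0 = 0)
    (hconc : ∀ a : ℝ, 0 ≤ a → ∀ b : ℝ, 0 ≤ b → ∀ l : ℝ, 0 ≤ l → l ≤ 1 →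
      l * g a + (1 - l) * g b ≤ g (l * a + (1 - l) * b))
    (W : ℕ → ℕ → ℝ)
    (hW : ∀ i j : ℕ, 1 ≤ i → i < j → Odd (j - i) → IsMinWeight x g i j (W i j))
    (hconv1 : ∀ i : ℕ, 1 ≤ i → W i (i - 1) = 0)
    (hconv2 : ∀ i : ℕ, 1 ≤ i → W (i + 2) (i - 1) = -g |x i - x (i + 1)|)
    (hsecond : ∀ i j : ℕ, 1 ≤ i → i < j → j ≤ 2 * n → Odd (j - i) →
      W i j = W i (j - 2) + W (i + 2) j - W (i + 2) (j - 2)) :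
    W 1 (2 * n) = ∑ k ∈ Finset.range n, g |x (2 * k + 1) - x (2 * k + 2)| := by
  have key : ∀ m : ℕ, ∀ i : ℕ, 1 ≤ i → i + 2 * m + 1 ≤ 2 * n →
      W i (i + 2 * m + 1) = ∑ k ∈ Finset.range (m + 1), g |x (i + 2 * k) - x (i + 2 * k + 1)| := by
    intro m
    induction m using Nat.strong_induction_on with
    | _ m ih =>
      intro i hi hle
      have hodd : Odd (i + 2 * m + 1 - i) := ⟨m, by omega⟩
      have hrec := hsecond i (i + 2 * m + 1) hi (by omega) hle hodd
      match m with
      | 0 =>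
        rw [show i + 2 * 0 + 1 - 2 = i - 1 by omega,
            show i + 2 * 0 + 1 = i + 1 by omega] at hrec
        have hb2 : W (i + 2) (i + 1) = 0 := by
          have := hconv1 (i + 2) (by omega)
          rwa [show i + 2 - 1 = i + 1 by omega] at this
        rw [hconv1 i hi, hb2, hconv2 i hi] at hrec
        rw [show i + 2 * 0 + 1 = i + 1 by omega, hrec, Finset.sum_range_one]
        norm_num
      | m' + 1 =>
        rw [show i + 2 * (m' + 1) + 1 - 2 = i + 2 * m' + 1 by omega] at hrec
        have hA := ih m' (by omega) i hi (by omega)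
        have hB := ih m' (by omega) (i + 2) (by omega) (by omega)
        rw [show i + 2 + 2 * m' + 1 = i + 2 * (m' + 1) + 1 by ring] at hB
        have hC : W (i + 2) (i + 2 * m' + 1) =
            ∑ k ∈ Finset.range m', g |x (i + 2 + 2 * k) - x (i + 2 + 2 * k + 1)| := by
          match m' with
          | 0 =>
            rw [show i + 2 * 0 + 1 = (i + 2) - 1 by omega, hconv1 (i + 2) (by omega)]
            simp
          | m'' + 1 =>
            have hD := ih m'' (by omega) (i + 2) (by omega) (by omega)
            rw [show i + 2 + 2 * m'' + 1 = i + 2 * (m'' + 1) + 1 by ring] at hD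
            exact hD
        have es : g |x (i + 2 + 2 * m') - x (i + 2 + 2 * m' + 1)| =
            g |x (i + 2 * (m' + 1)) - x (i + 2 * (m' + 1) + 1)| := by
          rw [show i + 2 + 2 * m' = i + 2 * (m' + 1) by ring]
        rw [hrec, hA, hB, hC, Finset.sum_range_succ, Finset.sum_range_succ,
          Finset.sum_range_succ, Finset.sum_range_succ, es]
        ring
  cases n with
  | zero => simpa using hconv1 1 (le_refl 1)
  | succ n' =>
    have hk := key n' 1 (le_refl 1) (by omega)
    rw [show 1 + 2 * n' + 1 = 2 * (n' + 1) by ring] at hk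
    rw [hk]
    refine Finset.sum_congr rfl fun k _ => ?_
    rw [show 1 + 2 * k = 2 * k + 1 by ring, show 2 * k + 1 + 1 = 2 * k + 2 by ring]
end
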